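/- arXiv:2007.06109 — 8 statements merged into one kernel-verified Lean document; each statement's English description precedes it below -/
import Mathlib

section
/- Let 0 < λ ≤ 1 and 0 < φ < π. Define g(θ) = sin^λ((φ−θ)/2) + sin^λ((φ+θ)/2) for θ ∈ [−φ, φ]. Then g attains its maximum value on [−φ, φ] only at θ = 0. -/
open Real Set

theorem stmt_0 (lam φ : ℝ) (hlam0 : 0 < lam) (hlam1 : lam ≤ 1)
    (hφ0 : 0 < φ) (hφπ : φ < π) :
    ∀ θ ∈ Icc (-φ) φ, θ ≠ 0 →
      Real.sin ((φ - θ) / 2) ^ lam + Real.sin ((φ + θ) / 2) ^ lam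
        < Real.sin ((φ - 0) / 2) ^ lam + Real.sin ((φ + 0) / 2) ^ lam := by
  intro θ hθ hθ0
  obtain ⟨h1, h2⟩ := hθ
  set a := (φ - θ) / 2 with ha
  set b := (φ + θ) / 2 with hb
  have haI : a ∈ Icc 0 π := ⟨by simp [ha]; linarith, by simp [ha]; linarith⟩
  have hbI : b ∈ Icc 0 π := ⟨by simp [hb]; linarith, by simp [hb]; linarith⟩
  have hab : a ≠ b := by
    simp only [ha, hb]; intro h; apply hθ0; field_simp at h; linarith
  -- strict concavity of sin on [0, π]
  have hsin : (1/2 : ℝ) • Real.sin a + (1/2 : ℝ) • Real.sin b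
      < Real.sin ((1/2 : ℝ) • a + (1/2 : ℝ) • b) :=
    strictConcaveOn_sin_Icc.2 haI hbI hab (by norm_num) (by norm_num) (by norm_num)
  have hmid : (1/2 : ℝ) • a + (1/2 : ℝ) • b = φ / 2 := by
    simp only [ha, hb, smul_eq_mul]; ring
  rw [hmid] at hsin
  have hsa : 0 ≤ Real.sin a := Real.sin_nonneg_of_mem_Icc haI
  have hsb : 0 ≤ Real.sin b := Real.sin_nonneg_of_mem_Icc hbI
  -- concavity of rpow
  have hcon : (1/2 : ℝ) • (Real.sin a ^ lam) + (1/2 : ℝ) • (Real.sin b ^ lam)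
      ≤ ((1/2 : ℝ) • Real.sin a + (1/2 : ℝ) • Real.sin b) ^ lam :=
    (Real.concaveOn_rpow hlam0.le hlam1).2 hsa hsb (by norm_num) (by norm_num) (by norm_num)
  have hlt : ((1/2 : ℝ) • Real.sin a + (1/2 : ℝ) • Real.sin b) ^ lam
      < Real.sin (φ / 2) ^ lam :=
    Real.rpow_lt_rpow (by positivity) hsin hlam0
  have : Real.sin a ^ lam + Real.sin b ^ lam < 2 * Real.sin (φ / 2) ^ lam := by
    have := hcon.trans_lt hlt
    simp only [smul_eq_mul] at this ⊢
    linarith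
  simpa [ha, hb, two_mul] using this
end

section
/- Let 0 < λ ≤ 1 and let z₁ ≠ z₂ be two points on the unit circle S¹ ⊂ ℂ. Let γ be one of the two closed arcs of S¹ connecting z₁ and z₂. Then the function z ↦ |z − z₁|^λ + |z − z₂|^λ attains its maximum on γ at a unique point, namely the midpoint of the arc γ. -/
open Real Set Complex

lemma abs_exp_sub_exp (s t : ℝ) :
    ‖Complex.exp ((t : ℂ) * Complex.I) - Complex.exp ((s : ℂ) * Complex.I)‖
      = 2 * |Real.sin ((t - s) / 2)| := by
  have h : Complex.exp ((t : ℂ) * Complex.I) - Complex.exp ((s : ℂ) * Complex.I)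
      = Complex.exp ((s : ℂ) * Complex.I) * (Complex.exp (((t - s : ℝ) : ℂ) * Complex.I) - 1) := by
    rw [mul_sub, ← Complex.exp_add, mul_one]
    push_cast
    ring_nf
  rw [h, norm_mul, Complex.norm_exp_ofReal_mul_I, one_mul]
  have hsq : (‖Complex.exp (((t - s : ℝ) : ℂ) * Complex.I) - 1‖) ^ 2
      = (2 * |Real.sin ((t - s) / 2)|) ^ 2 := by
    rw [Complex.sq_norm, Complex.normSq_apply]
    simp only [Complex.sub_re, Complex.sub_im, Complex.exp_ofReal_mul_I_re,
      Complex.exp_ofReal_mul_I_im, Complex.one_re, Complex.one_im, sub_zero]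
    rw [mul_pow, _root_.sq_abs]
    have h1 : Real.cos (t - s) = Real.cos ((t - s) / 2) ^ 2 - Real.sin ((t - s) / 2) ^ 2 := by
      rw [← Real.cos_two_mul']; ring_nf
    have h2 : Real.sin (t - s) = 2 * Real.sin ((t - s) / 2) * Real.cos ((t - s) / 2) := by
      rw [← Real.sin_two_mul]; ring_nf
    rw [h1, h2]
    linear_combination (Real.sin ((t - s) / 2) ^ 2 + Real.cos ((t - s) / 2) ^ 2 - 1) *
      Real.sin_sq_add_cos_sq ((t - s) / 2)
  have h0 : (0 : ℝ) ≤ ‖Complex.exp (((t - s : ℝ) : ℂ) * Complex.I) - 1‖ :=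
    norm_nonneg _
  have h0' : (0 : ℝ) ≤ 2 * |Real.sin ((t - s) / 2)| := by positivity
  nlinarith [hsq, h0, h0']

lemma key_ineq (lam u v : ℝ) (hlam0 : 0 < lam) (hlam1 : lam ≤ 1)
    (hu : 0 ≤ u) (hv : 0 ≤ v) (huv : u + v ≤ π) (hne : u ≠ v) :
    Real.sin u ^ lam + Real.sin v ^ lam < 2 * Real.sin ((u + v) / 2) ^ lam := by
  have hpi : 0 < π := Real.pi_pos
  have hum : u ∈ Icc (0:ℝ) π := ⟨hu, by linarith⟩
  have hvm : v ∈ Icc (0:ℝ) π := ⟨hv, by linarith⟩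
  have hsu : 0 ≤ Real.sin u := Real.sin_nonneg_of_nonneg_of_le_pi hu (by linarith)
  have hsv : 0 ≤ Real.sin v := Real.sin_nonneg_of_nonneg_of_le_pi hv (by linarith)
  have hconc := strictConcaveOn_sin_Icc.2 hum hvm hne (by norm_num : (0:ℝ) < 1/2)
    (by norm_num : (0:ℝ) < 1/2) (by norm_num)
  simp only [smul_eq_mul] at hconc
  have hmid : (1/2 : ℝ) * u + (1/2 : ℝ) * v = (u + v) / 2 := by ring
  rw [hmid] at hconc
  -- hconc : 1/2 * sin u + 1/2 * sin v < sin ((u+v)/2)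
  have hcav := (Real.concaveOn_rpow hlam0.le hlam1).2 (Set.mem_Ici.2 hsu) (Set.mem_Ici.2 hsv)
    (by norm_num : (0:ℝ) ≤ 1/2) (by norm_num : (0:ℝ) ≤ 1/2) (by norm_num)
  simp only [smul_eq_mul] at hcav
  -- hcav : 1/2 * sin u ^ lam + 1/2 * sin v ^ lam ≤ (1/2 * sin u + 1/2 * sin v) ^ lam
  have hnn : (0:ℝ) ≤ 1/2 * Real.sin u + 1/2 * Real.sin v := by positivity
  have hlt : (1/2 * Real.sin u + 1/2 * Real.sin v) ^ lam < Real.sin ((u + v) / 2) ^ lam :=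
    Real.rpow_lt_rpow hnn hconc hlam0
  linarith

theorem stmt_1 (lam α β : ℝ) (hlam0 : 0 < lam) (hlam1 : lam ≤ 1)
    (hab : α < β) (hb : β < α + 2 * π) :
    ∀ t ∈ Icc α β, t ≠ (α + β) / 2 →
      ‖Complex.exp ((t : ℂ) * Complex.I) - Complex.exp ((α : ℂ) * Complex.I)‖ ^ lam
        + ‖Complex.exp ((t : ℂ) * Complex.I) - Complex.exp ((β : ℂ) * Complex.I)‖ ^ lam
      < ‖Complex.exp ((((α + β) / 2 : ℝ) : ℂ) * Complex.I) - Complex.exp ((α : ℂ) * Complex.I)‖ ^ lam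
        + ‖Complex.exp ((((α + β) / 2 : ℝ) : ℂ) * Complex.I) - Complex.exp ((β : ℂ) * Complex.I)‖ ^ lam := by
  intro t ht hne
  obtain ⟨ht1, ht2⟩ := ht
  have hpi : 0 < π := Real.pi_pos
  set u : ℝ := (t - α) / 2 with hu_def
  set v : ℝ := (β - t) / 2 with hv_def
  have hu : 0 ≤ u := by simp only [hu_def]; linarith
  have hv : 0 ≤ v := by simp only [hv_def]; linarith
  have huv : u + v ≤ π := by simp only [hu_def, hv_def]; linarith
  have hune : u ≠ v := by
    simp only [hu_def, hv_def]
    intro h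
    apply hne
    field_simp at h ⊢
    linarith
  -- rewrite the four absolute values
  rw [abs_exp_sub_exp α t, abs_exp_sub_exp β t, abs_exp_sub_exp α ((α + β) / 2),
    abs_exp_sub_exp β ((α + β) / 2)]
  have e1 : (t - α) / 2 = u := rfl
  have e2 : |Real.sin ((t - β) / 2)| = |Real.sin v| := by
    rw [show (t - β) / 2 = -v by simp only [hv_def]; ring, Real.sin_neg, abs_neg]
  have e3 : ((α + β) / 2 - α) / 2 = (u + v) / 2 := by simp only [hu_def, hv_def]; ring
  have e4 : |Real.sin (((α + β) / 2 - β) / 2)| = |Real.sin ((u + v) / 2)| := by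
    rw [show ((α + β) / 2 - β) / 2 = -((u + v) / 2) by simp only [hu_def, hv_def]; ring,
      Real.sin_neg, abs_neg]
  rw [e1, e2, e3, e4]
  have hsu : 0 ≤ Real.sin u := Real.sin_nonneg_of_nonneg_of_le_pi hu (by linarith)
  have hsv : 0 ≤ Real.sin v := Real.sin_nonneg_of_nonneg_of_le_pi hv (by linarith)
  have hsm : 0 ≤ Real.sin ((u + v) / 2) :=
    Real.sin_nonneg_of_nonneg_of_le_pi (by linarith) (by linarith)
  rw [_root_.abs_of_nonneg hsu, _root_.abs_of_nonneg hsv, _root_.abs_of_nonneg hsm]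
  rw [Real.mul_rpow (by norm_num) hsu, Real.mul_rpow (by norm_num) hsv,
    Real.mul_rpow (by norm_num) hsm]
  have hkey := key_ineq lam u v hlam0 hlam1 hu hv huv hune
  have h2 : (0:ℝ) < (2:ℝ) ^ lam := Real.rpow_pos_of_pos (by norm_num) lam
  nlinarith [hkey, h2]
end

section
/- Let λ > 2, and let a be a fixed point on the unit sphere S^d ⊂ ℝ^{d+1}, d ≥ 1. Then the function x ↦ |x − a|^λ + |x + a|^λ on S^d attains its maximum value 2^λ only at the points x = a and x = −a. -/
open Real

lemma aux_strict (u v p : ℝ) (hu : 0 < u) (hv : 0 < v) (hp : 1 < p) :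
    u ^ p + v ^ p < (u + v) ^ p := by
  have hp1 : 0 < p - 1 := by linarith
  have hu1 : u ^ p = u * u ^ (p - 1) := by
    rw [show p = 1 + (p - 1) by ring, Real.rpow_add hu, Real.rpow_one]
    ring_nf
  have hv1 : v ^ p = v * v ^ (p - 1) := by
    rw [show p = 1 + (p - 1) by ring, Real.rpow_add hv, Real.rpow_one]
    ring_nf
  have h2 : u ^ (p - 1) < (u + v) ^ (p - 1) :=
    Real.rpow_lt_rpow hu.le (by linarith) hp1
  have h3 : v ^ (p - 1) < (u + v) ^ (p - 1) :=
    Real.rpow_lt_rpow hv.le (by linarith) hp1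
  have h4 : (u + v) ^ p = (u + v) * (u + v) ^ (p - 1) := by
    rw [show p = 1 + (p - 1) by ring, Real.rpow_add (by linarith : (0:ℝ) < u + v), Real.rpow_one]
    ring_nf
  calc u ^ p + v ^ p = u * u ^ (p - 1) + v * v ^ (p - 1) := by rw [hu1, hv1]
    _ < u * (u + v) ^ (p - 1) + v * (u + v) ^ (p - 1) := by
        have := mul_lt_mul_of_pos_left h2 hu
        have := mul_lt_mul_of_pos_left h3 hv
        linarith
    _ = (u + v) * (u + v) ^ (p - 1) := by ring
    _ = (u + v) ^ p := h4.symm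

lemma aux_le (u v p : ℝ) (hu : 0 ≤ u) (hv : 0 ≤ v) (hp : 1 < p) :
    u ^ p + v ^ p ≤ (u + v) ^ p := by
  have hp0 : p ≠ 0 := by positivity
  rcases hu.eq_or_lt with h | h
  · simp [← h, Real.zero_rpow hp0]
  rcases hv.eq_or_lt with h' | h'
  · simp [← h', Real.zero_rpow hp0]
  exact (aux_strict u v p h h' hp).le

lemma sq_rpow (t : ℝ) (ht : 0 ≤ t) (p : ℝ) : (t ^ 2) ^ (p / 2) = t ^ p := by
  rw [← Real.rpow_natCast t 2, ← Real.rpow_mul ht]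
  norm_num
  congr 1
  ring

theorem stmt_2 (d : ℕ) (hd : 1 ≤ d) (lam : ℝ) (hlam : 2 < lam)
    (a : EuclideanSpace ℝ (Fin (d + 1)))
    (ha : a ∈ Metric.sphere (0 : EuclideanSpace ℝ (Fin (d + 1))) 1) :
    (∀ x ∈ Metric.sphere (0 : EuclideanSpace ℝ (Fin (d + 1))) 1,
        ‖x - a‖ ^ lam + ‖x + a‖ ^ lam ≤ 2 ^ lam) ∧
    ‖a - a‖ ^ lam + ‖a + a‖ ^ lam = 2 ^ lam ∧
    ‖(-a) - a‖ ^ lam + ‖(-a) + a‖ ^ lam = 2 ^ lam ∧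
    (∀ x ∈ Metric.sphere (0 : EuclideanSpace ℝ (Fin (d + 1))) 1,
        ‖x - a‖ ^ lam + ‖x + a‖ ^ lam = 2 ^ lam → x = a ∨ x = -a) := by
  have hlam0 : lam ≠ 0 := by positivity
  have ha1 : ‖a‖ = 1 := by simpa using mem_sphere_zero_iff_norm.mp ha
  have hp : 1 < lam / 2 := by linarith
  have key : ∀ x : EuclideanSpace ℝ (Fin (d + 1)), ‖x‖ = 1 →
      ‖x - a‖ ^ 2 + ‖x + a‖ ^ 2 = 4 := by
    intro x hx
    have h1 := norm_sub_sq_real x a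
    have h2 := norm_add_sq_real x a
    rw [hx, ha1] at h1 h2
    linarith
  have four : ((4 : ℝ)) ^ (lam / 2) = 2 ^ lam := by
    have : (4 : ℝ) = 2 ^ (2 : ℕ) := by norm_num
    rw [this, sq_rpow 2 (by norm_num) lam]
  have rw1 : ∀ x : EuclideanSpace ℝ (Fin (d + 1)),
      ‖x - a‖ ^ lam + ‖x + a‖ ^ lam
        = (‖x - a‖ ^ 2) ^ (lam / 2) + (‖x + a‖ ^ 2) ^ (lam / 2) := by
    intro x
    rw [sq_rpow _ (norm_nonneg _), sq_rpow _ (norm_nonneg _)]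
  have haa : ‖a + a‖ = 2 := by
    have : a + a = (2 : ℝ) • a := by module
    rw [this, norm_smul, ha1]; norm_num
  have eq1 : ‖a - a‖ ^ lam + ‖a + a‖ ^ lam = 2 ^ lam := by
    rw [sub_self, norm_zero, Real.zero_rpow hlam0, haa, zero_add]
  refine ⟨?_, eq1, ?_, ?_⟩
  · intro x hx
    have hx1 : ‖x‖ = 1 := by simpa using mem_sphere_zero_iff_norm.mp hx
    rw [rw1 x]
    calc (‖x - a‖ ^ 2) ^ (lam / 2) + (‖x + a‖ ^ 2) ^ (lam / 2)
        ≤ (‖x - a‖ ^ 2 + ‖x + a‖ ^ 2) ^ (lam / 2) :=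
          aux_le _ _ _ (by positivity) (by positivity) hp
      _ = 2 ^ lam := by rw [key x hx1, four]
  · have h1 : (-a) - a = -(a + a) := by module
    have h2 : (-a) + a = 0 := by module
    rw [h1, h2, norm_neg, norm_zero, Real.zero_rpow hlam0, haa, add_zero]
  · intro x hx heq
    have hx1 : ‖x‖ = 1 := by simpa using mem_sphere_zero_iff_norm.mp hx
    by_contra h
    push_neg at h
    obtain ⟨h1, h2⟩ := h
    have hu : 0 < ‖x - a‖ ^ 2 := by
      have : x - a ≠ 0 := sub_ne_zero.mpr h1
      exact pow_pos (norm_pos_iff.mpr this) 2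
    have hv : 0 < ‖x + a‖ ^ 2 := by
      have : x + a ≠ 0 := by
        intro hc
        exact h2 (by linear_combination (norm := module) hc)
      exact pow_pos (norm_pos_iff.mpr this) 2
    have := aux_strict _ _ _ hu hv hp
    rw [key x hx1, four, ← rw1 x] at this
    linarith
end

section
/- Let λ > 0, d ≥ 1, and let (aₙ)ₙ₌₀^∞ ⊂ S^d be a sequence such that for every n ≥ 1, aₙ maximizes the function x ↦ Σ_{k=0}^{n−1} |x − a_k|^λ over S^d. Then a_{2k+1} = −a_{2k} for every k ≥ 0, and for every even index n = 2k ≥ 2 the potential U_{2k}(x) = Σ_{j=0}^{2k−1} |x − a_j|^λ satisfies U_{2k}(x) = U_{2k}(−x) for all x ∈ S^d. -/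
open Finset

theorem stmt_5 (d : ℕ) (hd : 1 ≤ d) (lam : ℝ) (hlam : 0 < lam)
    (a : ℕ → EuclideanSpace ℝ (Fin (d + 1)))
    (hsphere : ∀ n, a n ∈ Metric.sphere (0 : EuclideanSpace ℝ (Fin (d + 1))) 1)
    (hgreedy : ∀ n, 1 ≤ n → ∀ x ∈ Metric.sphere (0 : EuclideanSpace ℝ (Fin (d + 1))) 1,
        ∑ k ∈ Finset.range n, ‖x - a k‖ ^ lam ≤ ∑ k ∈ Finset.range n, ‖a n - a k‖ ^ lam) :
    (∀ k : ℕ, a (2 * k + 1) = -a (2 * k)) ∧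
    (∀ k : ℕ, 1 ≤ k → ∀ x ∈ Metric.sphere (0 : EuclideanSpace ℝ (Fin (d + 1))) 1,
        ∑ j ∈ Finset.range (2 * k), ‖x - a j‖ ^ lam
          = ∑ j ∈ Finset.range (2 * k), ‖(-x) - a j‖ ^ lam) := by
  have hnorm : ∀ n, ‖a n‖ = 1 := fun n => by
    simpa using mem_sphere_zero_iff_norm.mp (hsphere n)
  have hnegmem : ∀ y : EuclideanSpace ℝ (Fin (d + 1)),
      y ∈ Metric.sphere (0 : EuclideanSpace ℝ (Fin (d + 1))) 1 →
      -y ∈ Metric.sphere (0 : EuclideanSpace ℝ (Fin (d + 1))) 1 := by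
    intro y hy
    rw [mem_sphere_zero_iff_norm] at hy ⊢
    simpa using hy
  have hle2 : ∀ x y : EuclideanSpace ℝ (Fin (d + 1)), ‖x‖ = 1 → ‖y‖ = 1 →
      ‖x - y‖ ≤ 2 := by
    intro x y hx hy
    calc ‖x - y‖ ≤ ‖x‖ + ‖y‖ := norm_sub_le x y
      _ = 2 := by rw [hx, hy]; norm_num
  have hantip : ∀ x y : EuclideanSpace ℝ (Fin (d + 1)), ‖x‖ = 1 → ‖y‖ = 1 →
      2 ≤ ‖x - y‖ → x = -y := by
    intro x y hx hy h2
    have heq : ‖x - y‖ = 2 := le_antisymm (hle2 x y hx hy) h2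
    have hpar := parallelogram_law_with_norm ℝ x y
    have : ‖x + y‖ = 0 := by
      nlinarith [norm_nonneg (x + y)]
    have : x + y = 0 := norm_eq_zero.mp this
    linear_combination (norm := module) this
  have hnn : ∀ x y : EuclideanSpace ℝ (Fin (d + 1)), (2:ℝ) ^ lam ≤ ‖x - y‖ ^ lam →
      2 ≤ ‖x - y‖ := by
    intro x y h
    by_contra hc
    push_neg at hc
    exact absurd h (not_le.mpr (Real.rpow_lt_rpow (norm_nonneg _) hc hlam))
  -- the symmetry statement
  have key : ∀ k : ℕ,
      (∀ x ∈ Metric.sphere (0 : EuclideanSpace ℝ (Fin (d + 1))) 1,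
        ∑ j ∈ Finset.range (2 * k), ‖x - a j‖ ^ lam
          = ∑ j ∈ Finset.range (2 * k), ‖(-x) - a j‖ ^ lam) ∧
      a (2 * k + 1) = -a (2 * k) := by
    -- first a general step lemma
    have step : ∀ k : ℕ,
        (∀ x ∈ Metric.sphere (0 : EuclideanSpace ℝ (Fin (d + 1))) 1,
          ∑ j ∈ Finset.range (2 * k), ‖x - a j‖ ^ lam
            = ∑ j ∈ Finset.range (2 * k), ‖(-x) - a j‖ ^ lam) →
        a (2 * k + 1) = -a (2 * k) := by
      intro k hQ
      have hmax : ∀ x ∈ Metric.sphere (0 : EuclideanSpace ℝ (Fin (d + 1))) 1,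
          ∑ j ∈ Finset.range (2 * k), ‖x - a j‖ ^ lam
            ≤ ∑ j ∈ Finset.range (2 * k), ‖a (2 * k) - a j‖ ^ lam := by
        rcases Nat.eq_zero_or_pos k with hk | hk
        · subst hk; intro x _; simp
        · exact hgreedy (2 * k) (by omega)
      have h2 : ‖-a (2 * k) - a (2 * k)‖ = 2 := by
        have e : -a (2 * k) - a (2 * k) = (-2 : ℝ) • a (2 * k) := by module
        rw [e, norm_smul, hnorm]
        norm_num
      have hg := hgreedy (2 * k + 1) (by omega) (-a (2 * k)) (hnegmem _ (hsphere _))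
      rw [Finset.sum_range_succ, Finset.sum_range_succ] at hg
      have hswap := hQ (a (2 * k)) (hsphere _)
      have hmax2 := hmax (a (2 * k + 1)) (hsphere _)
      have h2l : (2:ℝ) ^ lam ≤ ‖a (2 * k + 1) - a (2 * k)‖ ^ lam := by
        rw [h2, ← hswap] at hg
        linarith
      exact hantip _ _ (hnorm _) (hnorm _) (hnn _ _ h2l)
    intro k
    induction k with
    | zero =>
      constructor
      · intro x _; simp
      · exact step 0 (by intro x _; simp)
    | succ k ih =>
      obtain ⟨hQ, hant⟩ := ih
      have hQ' : ∀ x ∈ Metric.sphere (0 : EuclideanSpace ℝ (Fin (d + 1))) 1,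
          ∑ j ∈ Finset.range (2 * (k + 1)), ‖x - a j‖ ^ lam
            = ∑ j ∈ Finset.range (2 * (k + 1)), ‖(-x) - a j‖ ^ lam := by
        intro x hx
        have hidx : 2 * (k + 1) = (2 * k + 1) + 1 := by ring
        rw [hidx, Finset.sum_range_succ, Finset.sum_range_succ,
          Finset.sum_range_succ, Finset.sum_range_succ, hQ x hx, hant]
        have e1 : ‖x - a (2 * k)‖ = ‖-x - -a (2 * k)‖ := by
          rw [show -x - -a (2 * k) = -(x - a (2 * k)) by module, norm_neg]
        have e2 : ‖x - -a (2 * k)‖ = ‖-x - a (2 * k)‖ := by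
          rw [show -x - a (2 * k) = -(x - -a (2 * k)) by module, norm_neg]
        rw [e1, e2]
        ring
      exact ⟨hQ', step (k + 1) hQ'⟩
  exact ⟨fun k => (key k).2, fun k _ => (key k).1⟩
end

section
/- Let d ≥ 1. A sequence (aₙ)ₙ₌₀^∞ ⊂ S^d is a greedy λ-energy sequence for λ = 2 (i.e., each aₙ with n ≥ 1 maximizes x ↦ Σ_{k=0}^{n−1} |x − a_k|² on S^d) if and only if a_{2k+1} = −a_{2k} for every k ≥ 0. -/
open Finset

theorem stmt_6 (d : ℕ) (hd : 1 ≤ d)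
    (a : ℕ → EuclideanSpace ℝ (Fin (d + 1)))
    (hsphere : ∀ n, a n ∈ Metric.sphere (0 : EuclideanSpace ℝ (Fin (d + 1))) 1) :
    (∀ n, 1 ≤ n → ∀ x ∈ Metric.sphere (0 : EuclideanSpace ℝ (Fin (d + 1))) 1,
        ∑ k ∈ Finset.range n, ‖x - a k‖ ^ 2 ≤ ∑ k ∈ Finset.range n, ‖a n - a k‖ ^ 2)
    ↔ (∀ k : ℕ, a (2 * k + 1) = -a (2 * k)) := by
  have hnorm : ∀ n, ‖a n‖ = 1 := by
    intro n; simpa using hsphere n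
  have expand : ∀ (x : EuclideanSpace ℝ (Fin (d + 1))), ‖x‖ = 1 → ∀ n : ℕ,
      ∑ k ∈ Finset.range n, ‖x - a k‖ ^ 2
        = 2 * n - 2 * (inner ℝ x (∑ k ∈ Finset.range n, a k) : ℝ) := by
    intro x hx n
    rw [Finset.sum_congr rfl (fun k _ => by
      rw [norm_sub_sq_real, hx, hnorm k]; ring :
      ∀ k ∈ Finset.range n, ‖x - a k‖ ^ 2 = 2 - 2 * (inner ℝ x (a k) : ℝ)),
      Finset.sum_sub_distrib, Finset.sum_const, Finset.card_range, inner_sum,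
      Finset.mul_sum]
    push_cast; ring
  constructor
  · intro h
    have main : ∀ k : ℕ, (∑ i ∈ Finset.range (2 * k), a i = 0)
        ∧ a (2 * k + 1) = -a (2 * k) := by
      intro k
      induction k with
      | zero =>
        constructor
        · simp
        · -- use greedy at n = 1 with x = -a 0
          have hg := h 1 le_rfl (-a 0) (by simpa using hsphere 0)
          rw [expand (-a 0) (by simp [hnorm 0]) 1,
              expand (a 1) (hnorm 1) 1] at hg
          simp only [Finset.sum_range_one] at hg
          have hinner : (inner ℝ (a 1) (a 0) : ℝ) ≤ -1 := by
            have h2 : (inner ℝ (-a 0) (a 0) : ℝ) = -1 := by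
              rw [inner_neg_left, real_inner_self_eq_norm_sq, hnorm 0]; norm_num
            nlinarith [hg, h2]
          have hsq : ‖a 1 + a 0‖ ^ 2 ≤ 0 := by
            rw [norm_add_sq_real, hnorm 0, hnorm 1]; nlinarith
          have : a 1 + a 0 = 0 := by
            have := sq_nonneg ‖a 1 + a 0‖
            have hn : ‖a 1 + a 0‖ = 0 := by nlinarith
            exact norm_eq_zero.mp hn
          simpa [eq_neg_iff_add_eq_zero] using this
      | succ m ih =>
        obtain ⟨hsum, hpair⟩ := ih
        have hsum' : ∑ i ∈ Finset.range (2 * (m + 1)), a i = 0 := by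
          have h2 : 2 * (m + 1) = (2 * m + 1) + 1 := by ring
          rw [h2, Finset.sum_range_succ, Finset.sum_range_succ, hsum, hpair]
          simp
        refine ⟨hsum', ?_⟩
        set n := 2 * (m + 1)
        have hS : ∑ i ∈ Finset.range (n + 1), a i = a n := by
          rw [Finset.sum_range_succ, hsum']; simp
        have hg := h (n + 1) (Nat.le_add_left 1 n) (-a n) (by simpa using hsphere n)
        rw [expand (-a n) (by simp [hnorm n]) (n + 1),
            expand (a (n + 1)) (hnorm (n + 1)) (n + 1), hS] at hg
        have hinner : (inner ℝ (a (n + 1)) (a n) : ℝ) ≤ -1 := by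
          have h2 : (inner ℝ (-a n) (a n) : ℝ) = -1 := by
            rw [inner_neg_left, real_inner_self_eq_norm_sq, hnorm n]; norm_num
          nlinarith [hg, h2]
        have hsq : ‖a (n + 1) + a n‖ ^ 2 ≤ 0 := by
          rw [norm_add_sq_real, hnorm n, hnorm (n + 1)]; nlinarith
        have : a (n + 1) + a n = 0 := by
          have := sq_nonneg ‖a (n + 1) + a n‖
          have hn : ‖a (n + 1) + a n‖ = 0 := by nlinarith
          exact norm_eq_zero.mp hn
        simpa [eq_neg_iff_add_eq_zero] using this
    exact fun k => (main k).2
  · intro h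
    have hsum0 : ∀ k : ℕ, ∑ i ∈ Finset.range (2 * k), a i = 0 := by
      intro k
      induction k with
      | zero => simp
      | succ m ih =>
        have h2 : 2 * (m + 1) = (2 * m + 1) + 1 := by ring
        rw [h2, Finset.sum_range_succ, Finset.sum_range_succ, ih, h m]
        simp
    intro n hn x hx
    have hx1 : ‖x‖ = 1 := by simpa using hx
    rw [expand x hx1 n, expand (a n) (hnorm n) n]
    rcases Nat.even_or_odd n with ⟨m, hm⟩ | ⟨m, hm⟩
    · have : ∑ i ∈ Finset.range n, a i = 0 := by
        rw [hm, ← two_mul]; exact hsum0 m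
      simp [this]
    · have hS : ∑ i ∈ Finset.range n, a i = a (2 * m) := by
        rw [hm, Finset.sum_range_succ, hsum0 m]; simp
      rw [hS, hm, h m]
      have h1 : (inner ℝ (-a (2 * m)) (a (2 * m)) : ℝ) = -1 := by
        rw [inner_neg_left, real_inner_self_eq_norm_sq, hnorm (2 * m)]; norm_num
      have h2 : -1 ≤ (inner ℝ x (a (2 * m)) : ℝ) := by
        have h3 := abs_real_inner_le_norm x (a (2 * m))
        rw [hx1, hnorm (2 * m), mul_one] at h3
        linarith [(abs_le.mp h3).1]
      rw [h1]; linarith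
end

section
/- Let d ≥ 1 and let (aₙ)ₙ₌₀^∞ ⊂ S^d be a greedy 2-energy sequence. Then for every n ≥ 1: H₂(α_{2n}) = 8n² and H₂(α_{2n+1}) = 8(n² + n), where α_N = (a₀, …, a_{N−1}) and H₂(α_N) = Σ_{0 ≤ i ≠ j ≤ N−1} |a_i − a_j|². -/
open Finset

theorem stmt_7 (d : ℕ) (hd : 1 ≤ d)
    (a : ℕ → EuclideanSpace ℝ (Fin (d + 1)))
    (hsphere : ∀ n, a n ∈ Metric.sphere (0 : EuclideanSpace ℝ (Fin (d + 1))) 1)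
    (hgreedy : ∀ n, 1 ≤ n → ∀ x ∈ Metric.sphere (0 : EuclideanSpace ℝ (Fin (d + 1))) 1,
        ∑ k ∈ Finset.range n, ‖x - a k‖ ^ 2 ≤ ∑ k ∈ Finset.range n, ‖a n - a k‖ ^ 2) :
    ∀ n : ℕ, 1 ≤ n →
      (∑ p ∈ ((Finset.range (2 * n)) ×ˢ (Finset.range (2 * n))).filter
          (fun p => p.1 ≠ p.2), ‖a p.1 - a p.2‖ ^ 2) = 8 * (n : ℝ) ^ 2 ∧
      (∑ p ∈ ((Finset.range (2 * n + 1)) ×ˢ (Finset.range (2 * n + 1))).filter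
          (fun p => p.1 ≠ p.2), ‖a p.1 - a p.2‖ ^ 2) = 8 * ((n : ℝ) ^ 2 + n) := by
  have hnorm : ∀ n, ‖a n‖ = 1 := fun n => by
    have := hsphere n
    simpa [Metric.mem_sphere, dist_eq_norm] using this
  have hexp : ∀ x y : EuclideanSpace ℝ (Fin (d + 1)), ‖x‖ = 1 → ‖y‖ = 1 →
      ‖x - y‖ ^ 2 = 2 - 2 * inner ℝ x y := by
    intro x y hx hy
    rw [norm_sub_sq_real, hx, hy]; ring
  -- greedy implies odd points are antipodes
  have hodd : ∀ k, (∑ j ∈ range (2 * k), a j) = 0 → a (2 * k + 1) = - a (2 * k) := by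
    intro k hS
    have hmem : (-a (2 * k)) ∈ Metric.sphere (0 : EuclideanSpace ℝ (Fin (d + 1))) 1 := by
      simp [Metric.mem_sphere, dist_eq_norm, hnorm]
    have hg := hgreedy (2 * k + 1) (by omega) _ hmem
    have hsum : ∀ x : EuclideanSpace ℝ (Fin (d + 1)), ‖x‖ = 1 →
        ∑ j ∈ range (2 * k + 1), ‖x - a j‖ ^ 2
          = 2 * (2 * k + 1) - 2 * inner ℝ x (a (2 * k)) := by
      intro x hx
      have h1 : ∑ j ∈ range (2 * k + 1), ‖x - a j‖ ^ 2
          = ∑ j ∈ range (2 * k + 1), (2 - 2 * inner ℝ x (a j)) := by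
        exact Finset.sum_congr rfl fun j _ => hexp x (a j) hx (hnorm j)
      rw [h1, Finset.sum_sub_distrib, Finset.sum_const, ← Finset.mul_sum, ← inner_sum,
        Finset.sum_range_succ, hS, zero_add, Finset.card_range]
      push_cast
      ring
    have e1 := hsum (-a (2 * k)) (by simpa using hnorm (2 * k))
    have e2 := hsum (a (2 * k + 1)) (hnorm _)
    rw [e1, e2] at hg
    have hin : (inner ℝ (-a (2 * k)) (a (2 * k)) : ℝ) = -1 := by
      rw [inner_neg_left, real_inner_self_eq_norm_sq, hnorm]; norm_num
    rw [hin] at hg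
    have h1 : (inner ℝ (a (2 * k + 1)) (a (2 * k)) : ℝ) ≤ -1 := by linarith
    have h2 : ‖a (2 * k + 1) + a (2 * k)‖ ^ 2 ≤ 0 := by
      rw [norm_add_sq_real, hnorm, hnorm]; nlinarith
    have h3 : a (2 * k + 1) + a (2 * k) = 0 := by
      have h4 : ‖a (2 * k + 1) + a (2 * k)‖ = 0 := by
        nlinarith [norm_nonneg (a (2 * k + 1) + a (2 * k))]
      exact norm_eq_zero.mp h4
    exact eq_neg_of_add_eq_zero_left h3
  have hS : ∀ k, (∑ j ∈ range (2 * k), a j) = 0 := by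
    intro k
    induction k with
    | zero => simp
    | succ k ih =>
      have h2 : 2 * (k + 1) = (2 * k + 1) + 1 := by ring
      rw [h2, Finset.sum_range_succ, Finset.sum_range_succ, ih, zero_add,
        hodd k ih]
      simp
  -- energy formula
  have energy : ∀ N : ℕ,
      (∑ p ∈ ((range N) ×ˢ (range N)).filter (fun p => p.1 ≠ p.2), ‖a p.1 - a p.2‖ ^ 2)
        = 2 * (N : ℝ) ^ 2 - 2 * ‖∑ j ∈ range N, a j‖ ^ 2 := by
    intro N
    have hfull : (∑ p ∈ (range N) ×ˢ (range N), ‖a p.1 - a p.2‖ ^ 2)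
        = 2 * (N : ℝ) ^ 2 - 2 * ‖∑ j ∈ range N, a j‖ ^ 2 := by
      rw [Finset.sum_product]
      have hrow : ∀ i ∈ range N, (∑ j ∈ range N, ‖a i - a j‖ ^ 2)
          = 2 * N - 2 * inner ℝ (a i) (∑ j ∈ range N, a j) := by
        intro i _
        have h1 : (∑ j ∈ range N, ‖a i - a j‖ ^ 2)
            = ∑ j ∈ range N, (2 - 2 * inner ℝ (a i) (a j)) := by
          exact Finset.sum_congr rfl fun j _ => hexp _ _ (hnorm i) (hnorm j)
        rw [h1, Finset.sum_sub_distrib, Finset.sum_const, ← Finset.mul_sum, ← inner_sum,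
          Finset.card_range]
        push_cast; ring
      rw [Finset.sum_congr rfl hrow, Finset.sum_sub_distrib, Finset.sum_const,
        ← Finset.mul_sum, ← sum_inner, real_inner_self_eq_norm_sq, Finset.card_range]
      push_cast; ring
    have hsplit := Finset.sum_filter_add_sum_filter_not ((range N) ×ˢ (range N))
      (fun p => p.1 ≠ p.2) (fun p => ‖a p.1 - a p.2‖ ^ 2)
    have hdiag : (∑ p ∈ ((range N) ×ˢ (range N)).filter (fun p => ¬ p.1 ≠ p.2),
        ‖a p.1 - a p.2‖ ^ 2) = 0 := by
      refine Finset.sum_eq_zero fun p hp => ?_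
      simp only [Finset.mem_filter, not_not] at hp
      rw [hp.2]; simp
    rw [hdiag, add_zero] at hsplit
    rw [hsplit, hfull]
  intro n hn
  constructor
  · rw [energy (2 * n), hS n]
    push_cast; simp; ring
  · have hS1 : (∑ j ∈ range (2 * n + 1), a j) = a (2 * n) := by
      rw [Finset.sum_range_succ, hS n, zero_add]
    rw [energy (2 * n + 1), hS1, hnorm]
    push_cast; ring
end

section
/- Let d ≥ 1, λ > 2, and let (aₙ) ⊂ S^d be a greedy λ-energy sequence. Then for each n ≥ 1, H_λ(α_{2n}) = 2^{λ+1} n² and H_λ(α_{2n+1}) = 2^{λ+1}(n² + n), where H_λ(α_N) = Σ_{0 ≤ i ≠ j ≤ N−1} |a_i − a_j|^λ. Consequently, H_λ(α_N)/N² → 2^{λ−1} as N → ∞. -/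
open Finset Filter

set_option maxHeartbeats 1000000 in

lemma aux_rpow_self_le {u r : ℝ} (hu : 0 ≤ u) (hu1 : u ≤ 1) (hr : 1 ≤ r) : u ^ r ≤ u := by
  rcases eq_or_lt_of_le hu with h | h
  · rw [← h, Real.zero_rpow (by linarith : r ≠ 0)]
  · calc u ^ r ≤ u ^ (1:ℝ) := Real.rpow_le_rpow_of_exponent_ge h hu1 hr
      _ = u := Real.rpow_one u

lemma aux_key_le {r p q u v : ℝ} (hr : 1 ≤ r) (hq : 0 ≤ q) (hpq : q ≤ p)
    (hu : 0 ≤ u) (hv : 0 ≤ v) (huv : u + v = 1) :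
    p * u ^ r + q * v ^ r ≤ p := by
  have hp : 0 ≤ p := hq.trans hpq
  have h1 : u ^ r ≤ u := aux_rpow_self_le hu (by linarith) hr
  have h2 : v ^ r ≤ v := aux_rpow_self_le hv (by linarith) hr
  nlinarith [mul_le_mul_of_nonneg_left h1 hp, mul_le_mul_of_nonneg_left h2 hq,
    mul_nonneg (sub_nonneg.2 hpq) hv]

lemma aux_key_eq {r p q u v : ℝ} (hr : 1 < r) (hq : 0 ≤ q) (hpq : q ≤ p)
    (hu : 0 ≤ u) (hv : 0 ≤ v) (huv : u + v = 1)
    (heq : p = p * u ^ r + q * v ^ r) :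
    (q < p → v = 0) ∧ (0 < p → u = 0 ∨ v = 0) := by
  have hp : 0 ≤ p := hq.trans hpq
  have h1 : u ^ r ≤ u := aux_rpow_self_le hu (by linarith) hr.le
  have h2 : v ^ r ≤ v := aux_rpow_self_le hv (by linarith) hr.le
  have e1 : p * u ^ r ≤ p * u := mul_le_mul_of_nonneg_left h1 hp
  have e2 : q * v ^ r ≤ q * v := mul_le_mul_of_nonneg_left h2 hq
  have e3 : p * u + q * v ≤ p := by nlinarith [mul_nonneg (sub_nonneg.2 hpq) hv]
  have g1 : p * u ^ r = p * u := by linarith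
  have g2 : q * v ^ r = q * v := by linarith
  have g3 : p * u + q * v = p := by linarith
  constructor
  · intro hlt
    have h0 : (p - q) * v = 0 := by nlinarith
    rcases mul_eq_zero.mp h0 with h | h
    · exact absurd h (by linarith)
    · exact h
  · intro hp0
    by_contra hcon
    push_neg at hcon
    obtain ⟨hu0, hv0⟩ := hcon
    have hu' : 0 < u := lt_of_le_of_ne hu (Ne.symm hu0)
    have hv' : 0 < v := lt_of_le_of_ne hv (Ne.symm hv0)
    have hu1 : u < 1 := by linarith
    have hlt : u ^ r < u ^ (1:ℝ) := Real.rpow_lt_rpow_of_exponent_gt hu' hu1 hr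
    rw [Real.rpow_one] at hlt
    nlinarith [mul_lt_mul_of_pos_left hlt hp0]

lemma aux_norm_rpow (lam : ℝ) {E : Type*} [SeminormedAddGroup E] (z : E) :
    ‖z‖ ^ lam = (2:ℝ) ^ lam * (‖z‖ ^ 2 / 4) ^ (lam / 2) := by
  have h2 : (0:ℝ) < (2:ℝ) ^ lam := Real.rpow_pos_of_pos two_pos lam
  have h4 : ((4:ℝ)) ^ (lam/2) = (2:ℝ) ^ lam := by
    rw [show (4:ℝ) = 2 ^ (2:ℕ) by norm_num, ← Real.rpow_natCast (2:ℝ) 2,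
      ← Real.rpow_mul (by norm_num : (0:ℝ) ≤ 2)]
    congr 1
    push_cast
    ring
  have hz : (‖z‖ ^ 2) ^ (lam / 2) = ‖z‖ ^ lam := by
    rw [← Real.rpow_natCast ‖z‖ 2, ← Real.rpow_mul (norm_nonneg z)]
    congr 1
    push_cast
    ring
  rw [Real.div_rpow (by positivity) (by norm_num), h4, hz]
  field_simp

lemma aux_sum_two_mul {M : Type*} [AddCommMonoid M] (f : ℕ → M) (k : ℕ) :
    ∑ i ∈ Finset.range (2*k), f i = ∑ j ∈ Finset.range k, (f (2*j) + f (2*j+1)) := by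
  induction k with
  | zero => simp
  | succ k ih =>
    rw [Finset.sum_range_succ, ← ih, show 2*(k+1) = (2*k+1)+1 by ring,
      Finset.sum_range_succ, Finset.sum_range_succ, add_assoc]

set_option maxHeartbeats 1000000 in
theorem stmt_11 (d : ℕ) (hd : 1 ≤ d) (lam : ℝ) (hlam : 2 < lam)
    (a : ℕ → EuclideanSpace ℝ (Fin (d + 1)))
    (hsphere : ∀ n, a n ∈ Metric.sphere (0 : EuclideanSpace ℝ (Fin (d + 1))) 1)
    (hgreedy : ∀ n, 1 ≤ n → ∀ x ∈ Metric.sphere (0 : EuclideanSpace ℝ (Fin (d + 1))) 1,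
        ∑ k ∈ Finset.range n, ‖x - a k‖ ^ lam ≤ ∑ k ∈ Finset.range n, ‖a n - a k‖ ^ lam) :
    (∀ n : ℕ, 1 ≤ n →
      (∑ p ∈ ((Finset.range (2 * n)) ×ˢ (Finset.range (2 * n))).filter
          (fun p => p.1 ≠ p.2), ‖a p.1 - a p.2‖ ^ lam)
        = 2 ^ (lam + 1) * (n : ℝ) ^ 2 ∧
      (∑ p ∈ ((Finset.range (2 * n + 1)) ×ˢ (Finset.range (2 * n + 1))).filter
          (fun p => p.1 ≠ p.2), ‖a p.1 - a p.2‖ ^ lam)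
        = 2 ^ (lam + 1) * ((n : ℝ) ^ 2 + n)) ∧
    Tendsto (fun N : ℕ =>
        (∑ p ∈ ((Finset.range N) ×ˢ (Finset.range N)).filter
          (fun p => p.1 ≠ p.2), ‖a p.1 - a p.2‖ ^ lam) / (N : ℝ) ^ 2)
      atTop (nhds (2 ^ (lam - 1))) := by
  have hnorm : ∀ n, ‖a n‖ = 1 := fun n => by
    simpa [mem_sphere_zero_iff_norm] using hsphere n
  have ha0 := hnorm 0
  have hlam0 : lam ≠ 0 := by linarith
  have hr1 : 1 < lam / 2 := by linarith
  have h2pos : (0:ℝ) < (2:ℝ) ^ lam := Real.rpow_pos_of_pos two_pos lam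
  have h2a : ‖a 0 + a 0‖ = 2 := by
    rw [← two_smul ℝ, norm_smul, ha0]
    norm_num
  have hneg_mem : -(a 0) ∈ Metric.sphere (0 : EuclideanSpace ℝ (Fin (d+1))) 1 := by
    rw [mem_sphere_zero_iff_norm, norm_neg, ha0]
  have hvalA : ‖(-(a 0)) - a 0‖ ^ lam = (2:ℝ) ^ lam := by
    rw [show (-(a 0)) - a 0 = -(a 0 + a 0) by abel, norm_neg, h2a]
  have hvalB : ‖(-(a 0)) + a 0‖ ^ lam = 0 := by
    rw [show (-(a 0)) + a 0 = 0 by abel, norm_zero, Real.zero_rpow hlam0]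
  have huv1 : ∀ x : EuclideanSpace ℝ (Fin (d+1)), ‖x‖ = 1 →
      ‖x - a 0‖^2/4 + ‖x + a 0‖^2/4 = 1 := by
    intro x hx
    have hp := parallelogram_law_with_norm ℝ x (a 0)
    rw [hx, ha0] at hp
    linarith
  have hsum' : ∀ k, (∀ j, j < k →
        ((a (2*j) = a 0 ∨ a (2*j) = -(a 0)) ∧ a (2*j+1) = -(a (2*j)))) →
      ∀ x : EuclideanSpace ℝ (Fin (d+1)),
      ∑ i ∈ range (2*k), ‖x - a i‖ ^ lam
        = k * (‖x - a 0‖ ^ lam + ‖x + a 0‖ ^ lam) := by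
    intro k hk x
    rw [aux_sum_two_mul (fun i => ‖x - a i‖ ^ lam) k]
    have hterm : ∀ j ∈ range k, ‖x - a (2*j)‖ ^ lam + ‖x - a (2*j+1)‖ ^ lam
        = ‖x - a 0‖ ^ lam + ‖x + a 0‖ ^ lam := by
      intro j hj
      obtain ⟨h1, h2⟩ := hk j (mem_range.mp hj)
      rcases h1 with h | h
      · rw [h2, h, sub_neg_eq_add]
      · rw [h2, h, neg_neg, sub_neg_eq_add, add_comm]
    rw [Finset.sum_congr rfl hterm, Finset.sum_const, card_range, nsmul_eq_mul]
  have main : ∀ k, (a (2*k) = a 0 ∨ a (2*k) = -(a 0)) ∧ a (2*k+1) = -(a (2*k)) := by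
    intro k
    induction k using Nat.strong_induction_on with
    | _ k ih =>
    have hS := hsum' k ih
    have heven : a (2*k) = a 0 ∨ a (2*k) = -(a 0) := by
      rcases Nat.eq_zero_or_pos k with rfl | hk
      · left; norm_num
      · have hg := hgreedy (2*k) (by omega) (-(a 0)) hneg_mem
        rw [hS, hS, hvalA, hvalB, add_zero,
          aux_norm_rpow lam (a (2*k) - a 0), aux_norm_rpow lam (a (2*k) + a 0)] at hg
        set u := ‖a (2*k) - a 0‖^2/4 with hu_def
        set v := ‖a (2*k) + a 0‖^2/4 with hv_def
        have huv : u + v = 1 := huv1 _ (hnorm (2*k))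
        have hu : 0 ≤ u := by positivity
        have hv : 0 ≤ v := by positivity
        have hle : (1:ℝ) * u ^ (lam/2) + 1 * v ^ (lam/2) ≤ 1 :=
          aux_key_le hr1.le zero_le_one le_rfl hu hv huv
        have hkpos : (0:ℝ) < k := by exact_mod_cast hk
        have heq : (1:ℝ) = 1 * u ^ (lam/2) + 1 * v ^ (lam/2) := by
          nlinarith [hg, hle, mul_pos hkpos h2pos]
        rcases (aux_key_eq hr1 zero_le_one le_rfl hu hv huv heq).2 one_pos with h | h
        · left
          have h2' : ‖a (2*k) - a 0‖ = 0 := by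
            have hsq : ‖a (2*k) - a 0‖^2 = 0 := by rw [hu_def] at h; linarith
            exact pow_eq_zero_iff two_ne_zero |>.mp hsq
          exact sub_eq_zero.mp (norm_eq_zero.mp h2')
        · right
          have h2' : ‖a (2*k) + a 0‖ = 0 := by
            have hsq : ‖a (2*k) + a 0‖^2 = 0 := by rw [hv_def] at h; linarith
            exact pow_eq_zero_iff two_ne_zero |>.mp hsq
          exact eq_neg_of_add_eq_zero_left (norm_eq_zero.mp h2')
    refine ⟨heven, ?_⟩
    have hmem : -(a (2*k)) ∈ Metric.sphere (0 : EuclideanSpace ℝ (Fin (d+1))) 1 := by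
      rw [mem_sphere_zero_iff_norm, norm_neg, hnorm]
    have hg := hgreedy (2*k+1) (by omega) (-(a (2*k))) hmem
    rw [Finset.sum_range_succ, Finset.sum_range_succ, hS, hS] at hg
    rcases heven with hz0 | hz0
    · -- a (2*k) = a 0
      rw [hz0, hvalA, hvalB, add_zero,
        aux_norm_rpow lam (a (2*k+1) - a 0), aux_norm_rpow lam (a (2*k+1) + a 0)] at hg
      set u := ‖a (2*k+1) - a 0‖^2/4 with hu_def
      set v := ‖a (2*k+1) + a 0‖^2/4 with hv_def
      have huv : u + v = 1 := huv1 _ (hnorm (2*k+1))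
      have hu : 0 ≤ u := by positivity
      have hv : 0 ≤ v := by positivity
      have hle : ((k:ℝ)+1) * u ^ (lam/2) + k * v ^ (lam/2) ≤ (k:ℝ)+1 :=
        aux_key_le hr1.le (Nat.cast_nonneg k) (by linarith) hu hv huv
      have hsc : (2:ℝ)^lam * (((k:ℝ)+1) * u ^ (lam/2) + k * v ^ (lam/2))
          = (2:ℝ)^lam * ((k:ℝ)+1) := le_antisymm
        (by linarith [mul_le_mul_of_nonneg_left hle h2pos.le]) (by linarith [hg])
      have heq : ((k:ℝ)+1) = ((k:ℝ)+1) * u ^ (lam/2) + k * v ^ (lam/2) :=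
        (mul_left_cancel₀ h2pos.ne' hsc).symm
      have hv0 := (aux_key_eq hr1 (Nat.cast_nonneg k) (by linarith) hu hv huv heq).1
        (by linarith)
      have h2' : ‖a (2*k+1) + a 0‖ = 0 := by
        have hsq : ‖a (2*k+1) + a 0‖^2 = 0 := by rw [hv_def] at hv0; linarith
        exact pow_eq_zero_iff two_ne_zero |>.mp hsq
      rw [hz0]
      exact eq_neg_of_add_eq_zero_left (norm_eq_zero.mp h2')
    · -- a (2*k) = -(a 0)
      rw [hz0, show (-(-(a 0))) = a 0 from neg_neg _, sub_self, norm_zero,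
        Real.zero_rpow hlam0, zero_add, h2a] at hg
      rw [show ‖a 0 - -(a 0)‖ = ‖a 0 + a 0‖ by rw [sub_neg_eq_add], h2a,
        show ∀ y : EuclideanSpace ℝ (Fin (d+1)), ‖y - -(a 0)‖ = ‖y + a 0‖ from
          fun y => by rw [sub_neg_eq_add],
        aux_norm_rpow lam (a (2*k+1) - a 0), aux_norm_rpow lam (a (2*k+1) + a 0)] at hg
      set u := ‖a (2*k+1) - a 0‖^2/4 with hu_def
      set v := ‖a (2*k+1) + a 0‖^2/4 with hv_def
      have huv : v + u = 1 := by have := huv1 _ (hnorm (2*k+1)); linarith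
      have hu : 0 ≤ u := by positivity
      have hv : 0 ≤ v := by positivity
      have hle : ((k:ℝ)+1) * v ^ (lam/2) + k * u ^ (lam/2) ≤ (k:ℝ)+1 :=
        aux_key_le hr1.le (Nat.cast_nonneg k) (by linarith) hv hu huv
      have hsc : (2:ℝ)^lam * (((k:ℝ)+1) * v ^ (lam/2) + k * u ^ (lam/2))
          = (2:ℝ)^lam * ((k:ℝ)+1) := le_antisymm
        (by linarith [mul_le_mul_of_nonneg_left hle h2pos.le]) (by linarith [hg])
      have heq : ((k:ℝ)+1) = ((k:ℝ)+1) * v ^ (lam/2) + k * u ^ (lam/2) :=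
        (mul_left_cancel₀ h2pos.ne' hsc).symm
      have hu0 := (aux_key_eq hr1 (Nat.cast_nonneg k) (by linarith) hv hu huv heq).1
        (by linarith)
      have h2' : ‖a (2*k+1) - a 0‖ = 0 := by
        have hsq : ‖a (2*k+1) - a 0‖^2 = 0 := by rw [hu_def] at hu0; linarith
        exact pow_eq_zero_iff two_ne_zero |>.mp hsq
      rw [hz0, neg_neg]
      exact sub_eq_zero.mp (norm_eq_zero.mp h2')
  -- energy computations
  have hD : ∀ N : ℕ, (∑ p ∈ ((range N) ×ˢ (range N)).filter (fun p => p.1 ≠ p.2),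
        ‖a p.1 - a p.2‖ ^ lam)
      = ∑ i ∈ range N, ∑ j ∈ range N, ‖a i - a j‖ ^ lam := by
    intro N
    rw [Finset.sum_filter_of_ne, Finset.sum_product]
    intro p _ hne
    contrapose! hne
    rw [hne, sub_self, norm_zero, Real.zero_rpow hlam0]
  have hS2 : ∀ k (x : EuclideanSpace ℝ (Fin (d+1))),
      ∑ i ∈ range (2*k), ‖x - a i‖ ^ lam
        = k * (‖x - a 0‖ ^ lam + ‖x + a 0‖ ^ lam) :=
    fun k => hsum' k (fun j _ => main j)
  have hFG : ∀ z : EuclideanSpace ℝ (Fin (d+1)), (z = a 0 ∨ z = -(a 0)) →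
      ‖z - a 0‖ ^ lam + ‖z + a 0‖ ^ lam = (2:ℝ) ^ lam := by
    intro z hz
    rcases hz with h | h
    · rw [h, sub_self, norm_zero, Real.zero_rpow hlam0, h2a, zero_add]
    · rw [h, hvalA, hvalB, add_zero]
  have hw_mem : ∀ k, a (2*k+1) = a 0 ∨ a (2*k+1) = -(a 0) := by
    intro k
    rcases (main k).1 with h | h
    · right; rw [(main k).2, h]
    · left; rw [(main k).2, h, neg_neg]
  have hcross_even : ∀ k, ∑ j ∈ range (2*k), ‖a (2*k) - a j‖ ^ lam = k * (2:ℝ)^lam := by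
    intro k
    rw [hS2 k (a (2*k)), hFG _ (main k).1]
  have hcross_odd : ∀ k,
      ∑ j ∈ range (2*k+1), ‖a (2*k+1) - a j‖ ^ lam = ((k:ℝ)+1) * (2:ℝ)^lam := by
    intro k
    rw [Finset.sum_range_succ, hS2 k (a (2*k+1)), hFG _ (hw_mem k)]
    have hlast : ‖a (2*k+1) - a (2*k)‖ = 2 := by
      rw [(main k).2, show -(a (2*k)) - a (2*k) = -(a (2*k) + a (2*k)) by abel, norm_neg,
        ← two_smul ℝ, norm_smul, hnorm]
      norm_num
    rw [hlast]
    ring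
  have hDrec : ∀ N, (∑ i ∈ range (N+1), ∑ j ∈ range (N+1), ‖a i - a j‖ ^ lam)
      = (∑ i ∈ range N, ∑ j ∈ range N, ‖a i - a j‖ ^ lam)
        + 2 * ∑ j ∈ range N, ‖a N - a j‖ ^ lam := by
    intro N
    rw [Finset.sum_range_succ]
    have hinner : ∀ i, ∑ j ∈ range (N+1), ‖a i - a j‖ ^ lam
        = (∑ j ∈ range N, ‖a i - a j‖ ^ lam) + ‖a i - a N‖ ^ lam :=
      fun i => Finset.sum_range_succ _ _
    rw [Finset.sum_congr rfl (fun i _ => hinner i), Finset.sum_add_distrib, hinner N]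
    have hsymm : ∑ i ∈ range N, ‖a i - a N‖ ^ lam = ∑ j ∈ range N, ‖a N - a j‖ ^ lam :=
      Finset.sum_congr rfl (fun j _ => by rw [norm_sub_rev])
    rw [hsymm, sub_self, norm_zero, Real.zero_rpow hlam0]
    ring
  have h2l1 : (2:ℝ) ^ (lam+1) = 2 * (2:ℝ) ^ lam := by
    rw [Real.rpow_add two_pos, Real.rpow_one]
    ring
  have hclosed : ∀ n : ℕ,
      (∑ i ∈ range (2*n), ∑ j ∈ range (2*n), ‖a i - a j‖ ^ lam)
        = 2 ^ (lam + 1) * (n : ℝ) ^ 2 ∧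
      (∑ i ∈ range (2*n+1), ∑ j ∈ range (2*n+1), ‖a i - a j‖ ^ lam)
        = 2 ^ (lam + 1) * ((n : ℝ) ^ 2 + n) := by
    intro n
    induction n with
    | zero =>
      constructor
      · norm_num
      · norm_num [Real.zero_rpow hlam0]
    | succ n ih =>
      have e1 : 2*(n+1) = (2*n+1)+1 := by ring
      have e2 : 2*(n+1)+1 = (2*(n+1))+1 := rfl
      have step1 := hDrec (2*n+1)
      rw [hcross_odd n] at step1
      have step2 := hDrec (2*(n+1))
      rw [hcross_even (n+1)] at step2
      constructor
      · rw [e1, step1, ih.2, h2l1]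
        push_cast
        ring
      · rw [e2, step2, e1, step1, ih.2, h2l1]
        push_cast
        ring
  refine ⟨fun n _ => ⟨by rw [hD]; exact (hclosed n).1, by rw [hD]; exact (hclosed n).2⟩, ?_⟩
  simp only [hD]
  have hcpos : (0:ℝ) < (2:ℝ) ^ (lam-1) := Real.rpow_pos_of_pos two_pos _
  have hc4 : (2:ℝ) ^ (lam+1) = 4 * (2:ℝ) ^ (lam-1) := by
    rw [show lam + 1 = (lam-1) + 2 by ring, Real.rpow_add two_pos,
      show ((2:ℝ) ^ (2:ℝ)) = 4 by
        rw [show (2:ℝ) = ((2:ℕ):ℝ) by norm_num, Real.rpow_natCast]; norm_num]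
    ring
  have hbound : ∀ N : ℕ,
      (2:ℝ)^(lam-1)*(N:ℝ)^2 - 2^(lam-1) ≤ (∑ i ∈ range N, ∑ j ∈ range N, ‖a i - a j‖ ^ lam)
      ∧ (∑ i ∈ range N, ∑ j ∈ range N, ‖a i - a j‖ ^ lam) ≤ (2:ℝ)^(lam-1)*(N:ℝ)^2 := by
    intro N
    rcases Nat.even_or_odd N with ⟨n, hn⟩ | ⟨n, hn⟩
    · have hn' : N = 2*n := by omega
      subst hn'
      rw [(hclosed n).1, hc4]
      push_cast
      constructor <;> nlinarith [hcpos]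
    · subst hn
      rw [(hclosed n).2, hc4]
      push_cast
      constructor <;> nlinarith [hcpos]
  have h1 : Tendsto (fun N : ℕ => (2:ℝ)^(lam-1) - (2:ℝ)^(lam-1)/(N:ℝ)^2) atTop
      (nhds ((2:ℝ)^(lam-1))) := by
    have h2 : Tendsto (fun N : ℕ => (N:ℝ)^2) atTop atTop :=
      (tendsto_pow_atTop two_ne_zero).comp tendsto_natCast_atTop_atTop
    have h3 : Tendsto (fun N : ℕ => (2:ℝ)^(lam-1)/(N:ℝ)^2) atTop (nhds 0) :=
      tendsto_const_nhds.div_atTop h2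
    simpa using tendsto_const_nhds.sub h3
  apply tendsto_of_tendsto_of_tendsto_of_le_of_le' h1
    (tendsto_const_nhds : Tendsto (fun _ : ℕ => (2:ℝ)^(lam-1)) atTop _)
  · filter_upwards [eventually_ge_atTop 1] with N hN
    have hNpos : (0:ℝ) < (N:ℝ) := by exact_mod_cast Nat.pos_of_ne_zero (by omega)
    have hN2 : (0:ℝ) < (N:ℝ)^2 := by positivity
    rw [le_div_iff₀ hN2]
    have hrw : ((2:ℝ)^(lam-1) - (2:ℝ)^(lam-1)/(N:ℝ)^2) * (N:ℝ)^2
        = (2:ℝ)^(lam-1)*(N:ℝ)^2 - (2:ℝ)^(lam-1) := by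
      field_simp
    rw [hrw]
    exact (hbound N).1
  · filter_upwards [eventually_ge_atTop 1] with N hN
    have hNpos : (0:ℝ) < (N:ℝ) := by exact_mod_cast Nat.pos_of_ne_zero (by omega)
    have hN2 : (0:ℝ) < (N:ℝ)^2 := by positivity
    rw [div_le_iff₀ hN2]
    exact (hbound N).2
end

section
/- Let 0 < λ < 2, d ≥ 1, and let (aₙ) ⊂ S^d be a greedy λ-energy sequence. Then for every k ≥ 0, U_{2k+1}(a_{2k+1}) = U_{2k}(a_{2k}) + 2^λ, where Uₙ(x) = Σ_{j=0}^{n−1}|x − a_j|^λ and U₀(a₀) = 0. -/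
open Finset

lemma antipode_aux {d : ℕ} {x y : EuclideanSpace ℝ (Fin (d + 1))}
    (hx : ‖x‖ = 1) (hy : ‖y‖ = 1) (h : ‖x - y‖ = 2) : y = -x := by
  have h2 : ‖x - y‖ ^ 2 = ‖x‖ ^ 2 - 2 * inner ℝ x y + ‖y‖ ^ 2 := norm_sub_sq_real x y
  rw [h, hx, hy] at h2
  have hinner : (inner ℝ x y : ℝ) = -1 := by nlinarith
  have hxy : (inner ℝ x (-y) : ℝ) = 1 := by
    rw [inner_neg_right, hinner]; ring
  have hny : ‖-y‖ = 1 := by rwa [norm_neg]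
  have := (inner_eq_one_iff_of_norm_eq_one hx hny).mp hxy
  rw [this]; simp

theorem stmt_14 (d : ℕ) (hd : 1 ≤ d) (lam : ℝ) (hlam0 : 0 < lam) (hlam2 : lam < 2)
    (a : ℕ → EuclideanSpace ℝ (Fin (d + 1)))
    (hsphere : ∀ n, a n ∈ Metric.sphere (0 : EuclideanSpace ℝ (Fin (d + 1))) 1)
    (hgreedy : ∀ n, 1 ≤ n → ∀ x ∈ Metric.sphere (0 : EuclideanSpace ℝ (Fin (d + 1))) 1,
        ∑ k ∈ Finset.range n, ‖x - a k‖ ^ lam ≤ ∑ k ∈ Finset.range n, ‖a n - a k‖ ^ lam) :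
    ∀ k : ℕ, ∑ j ∈ Finset.range (2 * k + 1), ‖a (2 * k + 1) - a j‖ ^ lam
      = (∑ j ∈ Finset.range (2 * k), ‖a (2 * k) - a j‖ ^ lam) + 2 ^ lam := by
  have hnorm : ∀ n, ‖a n‖ = 1 := fun n => by
    simpa using mem_sphere_zero_iff_norm.mp (hsphere n)
  -- distance between sphere points is at most 2
  have hle2 : ∀ m n : ℕ, ‖a m - a n‖ ≤ 2 := fun m n => by
    calc ‖a m - a n‖ ≤ ‖a m‖ + ‖a n‖ := norm_sub_le _ _
    _ = 2 := by rw [hnorm, hnorm]; norm_num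
  have hrpow_le : ∀ m n : ℕ, ‖a m - a n‖ ^ lam ≤ 2 ^ lam := fun m n =>
    Real.rpow_le_rpow (norm_nonneg _) (hle2 m n) hlam0.le
  have hneg_mem : ∀ n, -a n ∈ Metric.sphere (0 : EuclideanSpace ℝ (Fin (d + 1))) 1 := by
    intro n
    rw [mem_sphere_zero_iff_norm, norm_neg, hnorm]
  have hdist2 : ∀ n, ‖-a n - a n‖ = 2 := fun n => by
    have : -a n - a n = (-2 : ℝ) • a n := by module
    rw [this, norm_smul, hnorm]
    norm_num
  -- rpow equality forces norm equality
  have hforce : ∀ m n : ℕ, ‖a m - a n‖ ^ lam = 2 ^ lam → a m = -a n := by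
    intro m n h
    have heq : ‖a m - a n‖ = 2 := by
      by_contra hne
      have hlt : ‖a m - a n‖ < 2 := lt_of_le_of_ne (hle2 m n) hne
      have := Real.rpow_lt_rpow (norm_nonneg (a m - a n)) hlt hlam0
      linarith
    have h2 := antipode_aux (hnorm m) (hnorm n) heq
    rw [h2]; simp
  -- strong induction: energy equality and antipodality
  suffices H : ∀ k : ℕ, (∑ j ∈ Finset.range (2 * k + 1), ‖a (2 * k + 1) - a j‖ ^ lam
      = (∑ j ∈ Finset.range (2 * k), ‖a (2 * k) - a j‖ ^ lam) + 2 ^ lam)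
      ∧ a (2 * k + 1) = -a (2 * k) by
    exact fun k => (H k).1
  intro k
  induction k using Nat.strong_induction_on with
  | _ k IH =>
    -- symmetry of U_{2k}
    have hsym : ∀ x : EuclideanSpace ℝ (Fin (d + 1)),
        ∑ j ∈ Finset.range (2 * k), ‖x - a j‖ ^ lam
          = ∑ j ∈ Finset.range (2 * k), ‖-x - a j‖ ^ lam := by
      intro x
      induction k with
      | zero => simp
      | succ m ih =>
        have hanti : a (2 * m + 1) = -a (2 * m) := (IH m (Nat.lt_succ_self m)).2
        have hIH' : ∀ j, j < m → _ := fun j hj => IH j (hj.trans (Nat.lt_succ_self m))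
        have h2 : 2 * (m + 1) = (2 * m + 1) + 1 := by ring
        rw [h2, Finset.sum_range_succ, Finset.sum_range_succ,
          Finset.sum_range_succ, Finset.sum_range_succ, ih hIH']
        have e1 : ‖x - a (2 * m)‖ = ‖-x - a (2 * m + 1)‖ := by
          rw [hanti]
          rw [show -x - -a (2 * m) = -(x - a (2 * m)) by module, norm_neg]
        have e2 : ‖x - a (2 * m + 1)‖ = ‖-x - a (2 * m)‖ := by
          rw [hanti]
          rw [show x - -a (2 * m) = -(-x - a (2 * m)) by module, norm_neg]
        rw [e1, e2]; ring
    -- value at -a (2k)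
    have hval : ∑ j ∈ Finset.range (2 * k + 1), ‖-a (2 * k) - a j‖ ^ lam
        = (∑ j ∈ Finset.range (2 * k), ‖a (2 * k) - a j‖ ^ lam) + 2 ^ lam := by
      rw [Finset.sum_range_succ, ← hsym (a (2 * k)), hdist2]
    -- upper bound: U_{2k}(x) ≤ U_{2k}(a_{2k}) for x on sphere
    have hub : ∀ x ∈ Metric.sphere (0 : EuclideanSpace ℝ (Fin (d + 1))) 1,
        ∑ j ∈ Finset.range (2 * k), ‖x - a j‖ ^ lam
          ≤ ∑ j ∈ Finset.range (2 * k), ‖a (2 * k) - a j‖ ^ lam := by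
      intro x hx
      rcases k with _ | m
      · simp
      · exact hgreedy (2 * (m + 1)) (by omega) x hx
    -- lower bound via greedy at 2k+1
    have hge := hgreedy (2 * k + 1) (by omega) (-a (2 * k)) (hneg_mem _)
    rw [hval] at hge
    -- upper bound for the maximizer
    have hle : ∑ j ∈ Finset.range (2 * k + 1), ‖a (2 * k + 1) - a j‖ ^ lam
        ≤ (∑ j ∈ Finset.range (2 * k), ‖a (2 * k) - a j‖ ^ lam) + 2 ^ lam := by
      rw [Finset.sum_range_succ]
      exact add_le_add (hub _ (hsphere _)) (hrpow_le _ _)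
    have heq := le_antisymm hle hge
    refine ⟨heq, ?_⟩
    -- extract the equality of the last term
    have hterm : ‖a (2 * k + 1) - a (2 * k)‖ ^ lam = 2 ^ lam := by
      rw [Finset.sum_range_succ] at heq
      have h1 := hub (a (2 * k + 1)) (hsphere _)
      have h2 := hrpow_le (2 * k + 1) (2 * k)
      linarith
    exact hforce _ _ hterm
end
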